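/- arXiv:2506.17219 — 4 statements merged into one kernel-verified Lean document; each statement's English description precedes it below -/
import Mathlib

section
/- For a discrete probability distribution π over a finite set Y with full support, the covariance between π(y) and log π(y) equals zero if and only if π is the uniform distribution on Y. -/
lemma covaux_nonneg (a b : ℝ) (ha : 0 < a) (hb : 0 < b) :
    0 ≤ (a - b) * (Real.log a - Real.log b) := by
  rcases le_total a b with h | h
  · have hl : Real.log a ≤ Real.log b := Real.log_le_log ha h
    have := mul_nonneg (sub_nonneg.mpr h) (sub_nonneg.mpr hl)
    nlinarith
  · have hl : Real.log b ≤ Real.log a := Real.log_le_log hb h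
    exact mul_nonneg (sub_nonneg.mpr h) (sub_nonneg.mpr hl)

lemma covaux_eq (a b : ℝ) (ha : 0 < a) (hb : 0 < b)
    (h : (a - b) * (Real.log a - Real.log b) = 0) : a = b := by
  by_contra hne
  rcases lt_or_gt_of_ne hne with hlt | hlt
  · have hl : Real.log a < Real.log b := Real.log_lt_log ha hlt
    nlinarith
  · have hl : Real.log b < Real.log a := Real.log_lt_log hb hlt
    nlinarith

/-- The covariance between `π(y)` and `log π(y)` vanishes iff `π` is uniform. -/
theorem stmt1 {Y : Type*} [Fintype Y] [Nonempty Y] (π : Y → ℝ)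
    (hpos : ∀ y, 0 < π y) (hsum : ∑ y, π y = 1) :
    ((∑ y, π y * (π y * Real.log (π y))) -
      (∑ y, π y * π y) * (∑ y, π y * Real.log (π y)) = 0)
      ↔ ∀ y, π y = 1 / (Fintype.card Y : ℝ) := by
  have key : 2 * ((∑ y, π y * (π y * Real.log (π y))) -
      (∑ y, π y * π y) * (∑ y, π y * Real.log (π y)))
      = ∑ y, ∑ z, π y * π z *
        ((π y - π z) * (Real.log (π y) - Real.log (π z))) := by
    have h1 : ∀ y z : Y, π y * π z *
        ((π y - π z) * (Real.log (π y) - Real.log (π z)))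
        = (π y * (π y * Real.log (π y))) * π z
          + π y * (π z * (π z * Real.log (π z)))
          - (π y * π y) * (π z * Real.log (π z))
          - (π z * π z) * (π y * Real.log (π y)) := by
      intro y z; ring
    simp_rw [h1, Finset.sum_sub_distrib, Finset.sum_add_distrib,
      ← Finset.sum_mul, ← Finset.mul_sum, hsum]
    simp_rw [← Finset.sum_mul]
    rw [hsum]
    ring
  constructor
  · intro h0
    have hS : ∑ y, ∑ z, π y * π z *
        ((π y - π z) * (Real.log (π y) - Real.log (π z))) = 0 := by
      rw [← key, h0]; ring
    have hnn : ∀ y z : Y, 0 ≤ π y * π z *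
        ((π y - π z) * (Real.log (π y) - Real.log (π z))) := fun y z =>
      mul_nonneg (mul_nonneg (hpos y).le (hpos z).le)
        (covaux_nonneg _ _ (hpos y) (hpos z))
    have hconst : ∀ y z : Y, π y = π z := by
      intro y z
      have h1 := (Finset.sum_eq_zero_iff_of_nonneg
        (fun y _ => Finset.sum_nonneg (fun z _ => hnn y z))).mp hS y (Finset.mem_univ y)
      have h2 := (Finset.sum_eq_zero_iff_of_nonneg
        (fun z _ => hnn y z)).mp h1 z (Finset.mem_univ z)
      have hw : 0 < π y * π z := mul_pos (hpos y) (hpos z)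
      have : (π y - π z) * (Real.log (π y) - Real.log (π z)) = 0 := by
        rcases mul_eq_zero.mp h2 with h | h
        · exact absurd h hw.ne'
        · exact h
      exact covaux_eq _ _ (hpos y) (hpos z) this
    intro y
    have : ∑ z : Y, π y = 1 := by
      rw [← hsum]; exact Finset.sum_congr rfl (fun z _ => hconst y z)
    rw [Finset.sum_const, Finset.card_univ, nsmul_eq_mul] at this
    have hc : (0 : ℝ) < (Fintype.card Y : ℝ) := by
      exact_mod_cast Fintype.card_pos
    field_simp at this ⊢
    linarith
  · intro hu
    have hS : ∑ y, ∑ z, π y * π z *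
        ((π y - π z) * (Real.log (π y) - Real.log (π z))) = 0 := by
      apply Finset.sum_eq_zero; intro y _
      apply Finset.sum_eq_zero; intro z _
      rw [hu y, hu z]; ring
    linarith [key, hS]
end

section
/- Let π be a probability distribution with full support on a finite set A and for η ≥ 0 define π_η(a) = π(a)^{1+η} / ∑_{a'} π(a')^{1+η}. Then the Shannon entropy H(π_η) is non-increasing in η; in particular H(π_η) ≤ H(π) for all η ≥ 0. -/
/-- Gibbs' inequality: cross entropy dominates entropy. -/
lemma gibbs_aux {A : Type*} [Fintype A] (p q : A → ℝ) (hp : ∀ a, 0 < p a)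
    (hq : ∀ a, 0 < q a) (hpq : ∑ a, q a ≤ ∑ a, p a) :
    ∑ a, p a * Real.log (q a) ≤ ∑ a, p a * Real.log (p a) := by
  have h : ∀ a ∈ Finset.univ, p a * Real.log (q a) - p a * Real.log (p a) ≤ q a - p a := by
    intro a _
    have h1 : Real.log (q a / p a) ≤ q a / p a - 1 :=
      Real.log_le_sub_one_of_pos (div_pos (hq a) (hp a))
    rw [Real.log_div (hq a).ne' (hp a).ne'] at h1
    have h2 : p a * (q a / p a) = q a := mul_div_cancel₀ _ (hp a).ne'
    nlinarith [hp a]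
  have hs := Finset.sum_le_sum h
  rw [Finset.sum_sub_distrib, Finset.sum_sub_distrib] at hs
  linarith

/-- Raising a full-support probability vector to a power `t ≥ 1` and renormalizing
decreases the Shannon entropy. -/
lemma entropy_pow_le {A : Type*} [Fintype A] [Nonempty A] (p : A → ℝ)
    (hp : ∀ a, 0 < p a) (hs : ∑ a, p a = 1) {t : ℝ} (ht : 1 ≤ t) :
    (-∑ a, (p a ^ t / ∑ a', p a' ^ t) * Real.log (p a ^ t / ∑ a', p a' ^ t)) ≤
      -∑ a, p a * Real.log (p a) := by
  rcases eq_or_lt_of_le ht with rfl | ht1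
  · simp [Real.rpow_one, hs]
  set S : ℝ := ∑ a', p a' ^ t with hS
  have hSpos : 0 < S := Finset.sum_pos (fun a _ => Real.rpow_pos_of_pos (hp a) t)
    Finset.univ_nonempty
  set q : A → ℝ := fun a => p a ^ t / S with hqdef
  have hqpos : ∀ a, 0 < q a := fun a => div_pos (Real.rpow_pos_of_pos (hp a) t) hSpos
  have hqsum : ∑ a, q a = 1 := by
    rw [hqdef]; simp only; rw [← Finset.sum_div, ← hS, div_self hSpos.ne']
  have hlogq : ∀ a, Real.log (q a) = t * Real.log (p a) - Real.log S := by
    intro a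
    rw [hqdef]; simp only
    rw [Real.log_div (Real.rpow_pos_of_pos (hp a) t).ne' hSpos.ne',
      Real.log_rpow (hp a)]
  set E : ℝ := ∑ a, q a * Real.log (p a) with hE
  set P : ℝ := ∑ a, p a * Real.log (p a) with hP
  have hHq : ∑ a, q a * Real.log (q a) = t * E - Real.log S := by
    have : ∀ a, q a * Real.log (q a) = t * (q a * Real.log (p a)) - q a * Real.log S := by
      intro a; rw [hlogq a]; ring
    calc ∑ a, q a * Real.log (q a)
        = ∑ a, (t * (q a * Real.log (p a)) - q a * Real.log S) := by
          exact Finset.sum_congr rfl (fun a _ => this a)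
      _ = t * (∑ a, q a * Real.log (p a)) - (∑ a, q a) * Real.log S := by
          rw [Finset.sum_sub_distrib, Finset.sum_mul, Finset.mul_sum]
      _ = t * E - Real.log S := by rw [hqsum, one_mul, hE]
  -- Gibbs 1: KL(q‖p) ≥ 0
  have hg1 : E ≤ ∑ a, q a * Real.log (q a) :=
    gibbs_aux q p hqpos hp (by rw [hqsum, hs])
  rw [hHq] at hg1
  -- so log S ≤ (t-1) E
  have hlogS_le : Real.log S ≤ (t - 1) * E := by linarith [hg1]
  -- Gibbs 2: KL(p‖q) ≥ 0
  have hg2 : ∑ a, p a * Real.log (q a) ≤ P := gibbs_aux p q hp hqpos (by rw [hqsum, hs])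
  have hplogq : ∑ a, p a * Real.log (q a) = t * P - Real.log S := by
    have : ∀ a, p a * Real.log (q a) = t * (p a * Real.log (p a)) - p a * Real.log S := by
      intro a; rw [hlogq a]; ring
    calc ∑ a, p a * Real.log (q a)
        = ∑ a, (t * (p a * Real.log (p a)) - p a * Real.log S) :=
          Finset.sum_congr rfl (fun a _ => this a)
      _ = t * P - (∑ a, p a) * Real.log S := by
          rw [Finset.sum_sub_distrib, Finset.sum_mul, hP, Finset.mul_sum]
      _ = t * P - Real.log S := by rw [hs, one_mul]
  rw [hplogq] at hg2
  -- so (t-1) P ≤ log S, hence P ≤ E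
  have hPE : P ≤ E := by nlinarith [hg2, hlogS_le]
  -- conclude
  have : (-∑ a, q a * Real.log (q a)) ≤ -P := by
    rw [hHq]; nlinarith [hlogS_le, hPE]
  exact this

/-- For `π_η(a) = π(a)^{1+η} / ∑ π(a')^{1+η}`, the Shannon entropy `H(π_η)` is
non-increasing in `η ≥ 0`; in particular `H(π_η) ≤ H(π)` for all `η ≥ 0`. -/
theorem stmt10 {A : Type*} [Fintype A] [Nonempty A] (π : A → ℝ)
    (hpos : ∀ a, 0 < π a) (hsum : ∑ a, π a = 1)
    (πη : ℝ → A → ℝ)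
    (hπη : ∀ η a, πη η a = π a ^ (1 + η) / ∑ a', π a' ^ (1 + η)) :
    AntitoneOn (fun η => -∑ a, πη η a * Real.log (πη η a)) (Set.Ici 0) ∧
    ∀ η : ℝ, 0 ≤ η →
      (-∑ a, πη η a * Real.log (πη η a)) ≤ -∑ a, π a * Real.log (π a) := by
  have hSpos : ∀ η : ℝ, 0 < ∑ a', π a' ^ (1 + η) := fun η =>
    Finset.sum_pos (fun a _ => Real.rpow_pos_of_pos (hpos a) _) Finset.univ_nonempty
  have hπηpos : ∀ η a, 0 < πη η a := by
    intro η a; rw [hπη]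
    exact div_pos (Real.rpow_pos_of_pos (hpos a) _) (hSpos η)
  have hπηsum : ∀ η, ∑ a, πη η a = 1 := by
    intro η
    calc ∑ a, πη η a = ∑ a, π a ^ (1 + η) / ∑ a', π a' ^ (1 + η) :=
          Finset.sum_congr rfl (fun a _ => hπη η a)
      _ = 1 := by rw [← Finset.sum_div, div_self (hSpos η).ne']
  have hanti : AntitoneOn (fun η => -∑ a, πη η a * Real.log (πη η a)) (Set.Ici 0) := by
    intro η₁ h₁ η₂ h₂ h₁₂
    simp only [Set.mem_Ici] at h₁ h₂
    have hβ₁ : (0:ℝ) < 1 + η₁ := by linarith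
    have hβ₂ : (0:ℝ) < 1 + η₂ := by linarith
    set t : ℝ := (1 + η₂) / (1 + η₁) with htdef
    have ht : 1 ≤ t := (one_le_div hβ₁).mpr (by linarith)
    have key := entropy_pow_le (πη η₁) (hπηpos η₁) (hπηsum η₁) ht
    have hmul : (1 + η₁) * t = 1 + η₂ := by
      rw [htdef]; field_simp
    set S₁ : ℝ := ∑ a', π a' ^ (1 + η₁) with hS₁
    have hS₁pos : 0 < S₁ := hSpos η₁
    have hpt : ∀ a, πη η₁ a ^ t = π a ^ (1 + η₂) / S₁ ^ t := by
      intro a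
      rw [hπη, Real.div_rpow (Real.rpow_nonneg (hpos a).le _) hS₁pos.le,
        ← Real.rpow_mul (hpos a).le, hmul]
    have hSt : ∑ a', πη η₁ a' ^ t = (∑ a', π a' ^ (1 + η₂)) / S₁ ^ t := by
      rw [Finset.sum_div]
      exact Finset.sum_congr rfl (fun a _ => hpt a)
    have hq' : ∀ a, πη η₁ a ^ t / (∑ a', πη η₁ a' ^ t) = πη η₂ a := by
      intro a
      rw [hpt a, hSt, hπη]
      have h1 : (0:ℝ) < S₁ ^ t := Real.rpow_pos_of_pos hS₁pos t
      have h2 : (0:ℝ) < ∑ a', π a' ^ (1 + η₂) := hSpos η₂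
      field_simp
    simp only [hq'] at key
    exact key
  refine ⟨hanti, fun η hη => ?_⟩
  have h0 : ∀ a, πη 0 a = π a := by
    intro a
    rw [hπη]
    norm_num [Real.rpow_one, hsum]
  have := hanti (Set.mem_Ici.mpr le_rfl) (Set.mem_Ici.mpr hη) hη
  simp only [h0] at this
  exact this
end

section
/- The derivative at η = 0 of the entropy of the exponentially tilted distribution π_η(a) ∝ π(a)·exp(η·r(a)) equals −Cov_{a~π}(log π(a), r(a)). -/
/-- The derivative at `η = 0` of the entropy of the tilted distribution
`π_η(a) ∝ π(a) exp(η r(a))` equals `−Cov_{a∼π}(log π(a), r(a))`. -/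
theorem stmt11 {A : Type*} [Fintype A] [Nonempty A] (π : A → ℝ)
    (hpos : ∀ a, 0 < π a) (hsum : ∑ a, π a = 1) (r : A → ℝ)
    (πη : ℝ → A → ℝ)
    (hπη : ∀ η a, πη η a = π a * Real.exp (η * r a) / ∑ a', π a' * Real.exp (η * r a')) :
    HasDerivAt (fun η => -∑ a, πη η a * Real.log (πη η a))
      (-((∑ a, π a * (Real.log (π a) * r a)) -
         (∑ a, π a * Real.log (π a)) * (∑ a, π a * r a))) 0 := by
  set R := ∑ a, π a * r a with hR
  have hZ0 : (∑ a', π a' * Real.exp ((0:ℝ) * r a')) = 1 := by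
    simp [hsum]
  have hπ0 : ∀ a, πη 0 a = π a := by
    intro a
    rw [hπη, hZ0]
    simp
  have hd : ∀ a, HasDerivAt (fun η => πη η a) (π a * (r a - R)) 0 := by
    intro a
    have heq : (fun η => πη η a)
        = fun η => (π a * Real.exp (η * r a)) / ∑ a', π a' * Real.exp (η * r a') :=
      funext fun η => hπη η a
    rw [heq]
    have hN : HasDerivAt (fun η : ℝ => π a * Real.exp (η * r a)) (π a * r a) 0 := by
      have := ((hasDerivAt_mul_const (x := (0:ℝ)) (r a)).exp).const_mul (π a)
      simpa using this
    have hD : HasDerivAt (fun η : ℝ => ∑ a', π a' * Real.exp (η * r a')) R 0 := by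
      have := HasDerivAt.fun_sum (u := Finset.univ)
        (fun a' _ => ((hasDerivAt_mul_const (x := (0:ℝ)) (r a')).exp).const_mul (π a'))
      simpa [hR] using this
    have := hN.fun_div hD (by rw [hZ0]; norm_num)
    rw [hZ0] at this
    simp only [Real.exp_zero, mul_one, zero_mul] at this ⊢
    refine this.congr_deriv ?_
    ring
  have hterm : ∀ a, HasDerivAt (fun η => πη η a * Real.log (πη η a))
      ((Real.log (π a) + 1) * (π a * (r a - R))) 0 := by
    intro a
    have hφ : HasDerivAt (fun x : ℝ => x * Real.log x) (Real.log (π a) + 1) (π a) := by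
      have := (hasDerivAt_id (π a)).fun_mul (Real.hasDerivAt_log (hpos a).ne')
      have h2 : π a * (π a)⁻¹ = 1 := mul_inv_cancel₀ (hpos a).ne'
      simpa [h2, add_comm] using this
    have hφ' : HasDerivAt (fun x : ℝ => x * Real.log x) (Real.log (π a) + 1) (πη 0 a) := by
      rw [hπ0 a]; exact hφ
    exact hφ'.comp 0 (hd a)
  have hsumd : HasDerivAt (fun η => ∑ a, πη η a * Real.log (πη η a))
      (∑ a, (Real.log (π a) + 1) * (π a * (r a - R))) 0 :=
    HasDerivAt.fun_sum (fun a _ => hterm a)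
  have hval : (∑ a, (Real.log (π a) + 1) * (π a * (r a - R)))
      = (∑ a, π a * (Real.log (π a) * r a)) - (∑ a, π a * Real.log (π a)) * R := by
    have h1 : ∀ a, (Real.log (π a) + 1) * (π a * (r a - R))
        = π a * (Real.log (π a) * r a) - π a * Real.log (π a) * R + (π a * r a - π a * R) := by
      intro a; ring
    rw [Finset.sum_congr rfl fun a _ => h1 a]
    rw [Finset.sum_add_distrib, Finset.sum_sub_distrib, Finset.sum_sub_distrib,
      ← Finset.sum_mul, ← Finset.sum_mul, hsum, ← hR]
    ring
  have := hsumd.neg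
  rw [hval] at this
  exact this
end

section
/- If the reward is r(a) = log π(a) (trajectory-entropy reward), then the first-order change in entropy under the tilted update π_η(a) ∝ π(a)e^{η r(a)} is −Var_{a~π}(log π(a)) ≤ 0, so entropy decreases to first order unless π is uniform on its support. -/
/-- With the trajectory-entropy reward `r = log π`, the first-order change of
entropy along the tilt `π_η(a) ∝ π(a)^{1+η}` is `−Var_{a∼π}(log π(a)) ≤ 0`,
which vanishes iff `π` is uniform. -/
theorem stmt12 {A : Type*} [Fintype A] [Nonempty A] (π : A → ℝ)
    (hpos : ∀ a, 0 < π a) (hsum : ∑ a, π a = 1)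
    (πη : ℝ → A → ℝ)
    (hπη : ∀ η a, πη η a = π a ^ (1 + η) / ∑ a', π a' ^ (1 + η)) :
    HasDerivAt (fun η => -∑ a, πη η a * Real.log (πη η a))
      (-((∑ a, π a * (Real.log (π a))^2) - (∑ a, π a * Real.log (π a))^2)) 0 ∧
    0 ≤ (∑ a, π a * (Real.log (π a))^2) - (∑ a, π a * Real.log (π a))^2 ∧
    (((∑ a, π a * (Real.log (π a))^2) - (∑ a, π a * Real.log (π a))^2 = 0) ↔
      ∀ a, π a = 1 / (Fintype.card A : ℝ)) := by
  set m := ∑ a, π a * Real.log (π a) with hm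
  set Q := ∑ a, π a * (Real.log (π a))^2 with hQ
  set S : ℝ → ℝ := fun η => ∑ a', π a' ^ (1 + η) with hSdef
  set G : ℝ → ℝ := fun η => ∑ a, π a ^ (1 + η) * Real.log (π a) with hGdef
  have hterm : ∀ (η : ℝ) a, (0:ℝ) < π a ^ (1 + η) := fun η a =>
    Real.rpow_pos_of_pos (hpos a) _
  have hSpos : ∀ η, 0 < S η := fun η =>
    Finset.sum_pos (fun a _ => hterm η a) Finset.univ_nonempty
  have hS0 : S 0 = 1 := by
    simp only [hSdef, add_zero, Real.rpow_one]; exact hsum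
  have hG0 : G 0 = m := by
    simp only [hGdef, add_zero, Real.rpow_one, hm]
  -- key variance identity
  have hvar : ∑ a, π a * (Real.log (π a) - m)^2 = Q - m^2 := by
    have : ∀ a ∈ Finset.univ, π a * (Real.log (π a) - m)^2 =
        π a * (Real.log (π a))^2 - 2*m*(π a * Real.log (π a)) + m^2 * π a := by
      intro a _; ring
    rw [Finset.sum_congr rfl this, Finset.sum_add_distrib, Finset.sum_sub_distrib,
      ← Finset.mul_sum, ← Finset.mul_sum, hsum, ← hm, ← hQ]
    ring
  have hnonneg : 0 ≤ Q - m^2 := by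
    rw [← hvar]
    exact Finset.sum_nonneg fun a _ => mul_nonneg (hpos a).le (sq_nonneg _)
  refine ⟨?_, hnonneg, ?_⟩
  · -- derivative part
    have hfun : (fun η => -∑ a, πη η a * Real.log (πη η a)) =
        fun η => Real.log (S η) - (1+η) * G η / S η := by
      funext η
      have hSne : S η ≠ 0 := (hSpos η).ne'
      have h1 : ∀ a ∈ Finset.univ, πη η a * Real.log (πη η a) =
          ((1+η) * (π a ^ (1+η) * Real.log (π a)) - Real.log (S η) * π a ^ (1+η)) / S η := by
        intro a _
        have hSe : (∑ a' : A, π a' ^ (1+η)) = S η := rfl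
        rw [hπη, hSe]
        rw [Real.log_div (hterm η a).ne' hSne, Real.log_rpow (hpos a)]
        field_simp
      have hGe : (∑ a, π a ^ (1+η) * Real.log (π a)) = G η := rfl
      have hSe : (∑ a, π a ^ (1+η)) = S η := rfl
      rw [Finset.sum_congr rfl h1, ← Finset.sum_div, Finset.sum_sub_distrib,
        ← Finset.mul_sum, ← Finset.mul_sum, hGe, hSe]
      field_simp
      ring
    rw [hfun]
    have hSder : HasDerivAt S m 0 := by
      have : HasDerivAt S (∑ a, π a ^ ((1:ℝ)+0) * Real.log (π a)) 0 := by
        apply HasDerivAt.fun_sum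
        intro a _
        have := (Real.hasStrictDerivAt_const_rpow (hpos a) (1+0)).hasDerivAt
        have hc : HasDerivAt (fun η : ℝ => 1 + η) 1 0 := by
          simpa using (hasDerivAt_id (0:ℝ)).const_add 1
        have := this.comp 0 hc
        exact this.congr_deriv (mul_one _)
      simpa [Real.rpow_one, ← hm] using this
    have hGder : HasDerivAt G Q 0 := by
      have : HasDerivAt G (∑ a, (π a ^ ((1:ℝ)+0) * Real.log (π a)) * Real.log (π a)) 0 := by
        apply HasDerivAt.fun_sum
        intro a _
        have h1 := (Real.hasStrictDerivAt_const_rpow (hpos a) (1+0)).hasDerivAt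
        have hc : HasDerivAt (fun η : ℝ => 1 + η) 1 0 := by
          simpa using (hasDerivAt_id (0:ℝ)).const_add 1
        have h2 := h1.comp 0 hc
        have h3 := h2.mul_const (Real.log (π a))
        simpa using h3
      have heq : ∑ a, (π a ^ ((1:ℝ)+0) * Real.log (π a)) * Real.log (π a) = Q := by
        rw [hQ]
        simp only [add_zero, Real.rpow_one]
        exact Finset.sum_congr rfl fun a _ => by ring
      rw [heq] at this
      exact this
    have hS0ne : S 0 ≠ 0 := by rw [hS0]; exact one_ne_zero
    have d1 : HasDerivAt (fun η => Real.log (S η)) (m / S 0) 0 := hSder.log hS0ne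
    have hlin : HasDerivAt (fun η : ℝ => 1 + η) 1 0 := by
      simpa using (hasDerivAt_id (0:ℝ)).const_add 1
    have d2 : HasDerivAt (fun η => (1+η) * G η)
        (1 * G 0 + (1+0) * Q) 0 := hlin.mul hGder
    have d3 : HasDerivAt (fun η => (1+η) * G η / S η)
        (((1 * G 0 + (1+0) * Q) * S 0 - (1+0) * G 0 * m) / S 0 ^ 2) 0 :=
      d2.div hSder hS0ne
    have := d1.fun_sub d3
    exact this.congr_deriv (by rw [hS0, hG0]; ring)
  · constructor
    · intro h0
      have hz : ∑ a, π a * (Real.log (π a) - m)^2 = 0 := by rw [hvar, h0]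
      have hall : ∀ a ∈ Finset.univ, π a * (Real.log (π a) - m)^2 = 0 :=
        (Finset.sum_eq_zero_iff_of_nonneg
          (fun a _ => mul_nonneg (hpos a).le (sq_nonneg _))).mp hz
      have hconst : ∀ a, Real.log (π a) = m := by
        intro a
        have := hall a (Finset.mem_univ a)
        have h2 : (Real.log (π a) - m)^2 = 0 := by
          rcases mul_eq_zero.mp this with h | h
          · exact absurd h (hpos a).ne'
          · exact h
        have := pow_eq_zero_iff (n := 2) (by norm_num) |>.mp h2
        linarith
      have hπconst : ∀ a, π a = Real.exp m := by
        intro a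
        rw [← hconst a, Real.exp_log (hpos a)]
      intro a
      have hcard : (Fintype.card A : ℝ) * Real.exp m = 1 := by
        rw [← hsum]
        rw [Finset.sum_congr rfl (fun a _ => hπconst a)]
        simp [Finset.card_univ, mul_comm]
      have hcardpos : (0:ℝ) < (Fintype.card A : ℝ) := by
        exact_mod_cast Fintype.card_pos
      rw [hπconst a]
      field_simp at hcard ⊢
      linarith
    · intro h
      have hc : ∀ a, Real.log (π a) = Real.log (1 / (Fintype.card A : ℝ)) := by
        intro a; rw [h a]
      have hQval : Q = (Real.log (1 / (Fintype.card A : ℝ)))^2 := by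
        rw [hQ, Finset.sum_congr rfl (fun a _ => by rw [hc a]), ← Finset.sum_mul, hsum, one_mul]
      have hmval : m = Real.log (1 / (Fintype.card A : ℝ)) := by
        rw [hm, Finset.sum_congr rfl (fun a _ => by rw [hc a]), ← Finset.sum_mul, hsum, one_mul]
      rw [hQval, hmval]
      ring
end
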